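/- Let T be a structured upper triangular contraction on ℓ²(F_N^+) (i.e. T ∈ S(H)) and suppose |T(∅,∅)| = 1. Then T = T(∅,∅)·id, i.e. T is the scalar multiple of the identity by the unimodular number T(∅,∅). -/

import Mathlib

open scoped ComplexOrder

noncomputable section

/-- Words over the alphabet `{1,…,N}`: the free monoid `F_N^+` (the empty list is `∅`). -/
abbrev Word (N : ℕ) := List (Fin N)

/-- The Hilbert space `ℓ²(F_N^+)`. -/
abbrev H2 (N : ℕ) : Type := lp (fun _ : Word N => ℂ) 2

/-- The canonical orthonormal basis vector `e_σ`. -/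
def eb {N : ℕ} (σ : Word N) : H2 N := lp.single 2 σ 1

/-- The matrix entry `T(σ,τ) = ⟨T e_τ, e_σ⟩` (inner product linear in the first argument). -/
def entry {N : ℕ} (T : H2 N →L[ℂ] H2 N) (σ τ : Word N) : ℂ := (T (eb τ)) σ

/-- `T` is structured upper triangular. -/
def IsSUT {N : ℕ} (T : H2 N →L[ℂ] H2 N) : Prop :=
  (∀ (a b : Fin N) (σ τ : Word N),
      entry T (a :: σ) (b :: τ) = if a = b then entry T σ τ else 0) ∧
  (∀ σ τ : Word N, τ.length < σ.length → entry T σ τ = 0)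

lemma norm_eb {N : ℕ} (σ : Word N) : ‖eb σ‖ = 1 := by
  have h := lp.norm_single (E := fun _ : Word N => ℂ) (p := 2)
    (by norm_num) σ (1 : ℂ)
  simpa [eb] using h

lemma inner_eb_left {N : ℕ} (σ : Word N) (f : H2 N) :
    (inner ℂ (eb σ) f : ℂ) = f σ := by
  rw [eb, lp.inner_single_left]
  simp

/-- If `T ∈ S(H)` and `|T(∅,∅)| = 1` then `T = T(∅,∅)·id`. -/
theorem schur_unimodular_corner {N : ℕ} (hN : 1 ≤ N)
    (T : H2 N →L[ℂ] H2 N) (hT : IsSUT T) (hTnorm : ‖T‖ ≤ 1)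
    (hcorner : ‖entry T [] []‖ = 1) :
    T = entry T [] [] • (1 : H2 N →L[ℂ] H2 N) := by
  set c : ℂ := entry T [] [] with hc
  -- diagonal entries are all `c`
  have hdiag : ∀ τ : Word N, entry T τ τ = c := by
    intro τ
    induction τ with
    | nil => rfl
    | cons a τ ih => rw [hT.1 a a τ τ, if_pos rfl, ih]
  -- each basis vector is an eigenvector
  have hvec : ∀ τ : Word N, T (eb τ) = c • eb τ := by
    intro τ
    have hnormle : ‖T (eb τ)‖ ≤ 1 := by
      calc ‖T (eb τ)‖ ≤ ‖T‖ * ‖eb τ‖ := T.le_opNorm _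
        _ ≤ 1 := by rw [norm_eb, mul_one]; exact hTnorm
    have hinner : (inner ℂ (eb τ) (T (eb τ)) : ℂ) = c := by
      rw [inner_eb_left]; exact hdiag τ
    have hcs : ‖(inner ℂ (eb τ) (T (eb τ)) : ℂ)‖ ≤ ‖eb τ‖ * ‖T (eb τ)‖ :=
      norm_inner_le_norm _ _
    rw [hinner, hc, hcorner, norm_eb, one_mul] at hcs
    have hTn : ‖T (eb τ)‖ = 1 := le_antisymm hnormle hcs
    have heq : ‖(inner ℂ (eb τ) (T (eb τ)) : ℂ)‖ = ‖eb τ‖ * ‖T (eb τ)‖ := by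
      rw [hinner, hc, hcorner, norm_eb, hTn, one_mul]
    have hx0 : eb τ ≠ 0 := by
      intro h; have := norm_eb (N := N) τ; rw [h, norm_zero] at this; norm_num at this
    have hy0 : T (eb τ) ≠ 0 := by
      intro h; rw [h, norm_zero] at hTn; norm_num at hTn
    obtain ⟨r, -, hr⟩ := (norm_inner_eq_norm_iff hx0 hy0).mp heq
    have : c = r := by
      rw [← hinner, hr, inner_smul_right, eb, lp.inner_single_left]
      simp [lp.single_apply_self]
    rw [hr, ← this]
  -- conclude by density (every element is a sum of basis vectors)
  refine ContinuousLinearMap.ext fun f => ?_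
  have hsum : HasSum (fun σ : Word N => lp.single 2 σ (f σ)) f :=
    lp.hasSum_single (by norm_num) f
  have h1 : HasSum (fun σ : Word N => T (lp.single 2 σ (f σ))) (T f) :=
    hsum.mapL T
  have hkey : ∀ σ : Word N, T (lp.single 2 σ (f σ)) = c • lp.single 2 σ (f σ) := by
    intro σ
    have : lp.single 2 σ (f σ) = f σ • eb σ := by
      rw [eb, ← lp.single_smul]; norm_num
    rw [this, map_smul, hvec, smul_comm]
  simp_rw [hkey] at h1
  have h2 : HasSum (fun σ : Word N => c • lp.single 2 σ (f σ)) (c • f) :=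
    hsum.const_smul c
  rw [ContinuousLinearMap.smul_apply, ContinuousLinearMap.one_apply]
  exact h1.unique h2
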